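/- Assume the V structure. (i) If X has strictly positive effects on C at both levels of Y and Y has strictly positive effects on C at both levels of X (i.e., p_{C=1|10} > p_{C=1|00}, p_{C=1|11} > p_{C=1|01}, p_{C=1|01} > p_{C=1|00}, p_{C=1|11} > p_{C=1|10}), or if all four of these effects are strictly negative (all four inequalities reversed), then P(C=0) > 0 and P(C=1) > 0, and there exists c ∈ {0,1} such that cov(X, Y | C=c) < 0. (ii) If X has strictly positive effects on C at both levels of Y and Y has strictly negative effects on C at both levels of X (i.e., p_{C=1|10} > p_{C=1|00}, p_{C=1|11} > p_{C=1|01}, p_{C=1|01} < p_{C=1|00}, p_{C=1|11} < p_{C=1|10}), or vice versa (X strictly negative and Y strictly positive), then P(C=0) > 0 and P(C=1) > 0, and there exists c ∈ {0,1} such that cov(X, Y | C=c) > 0. -/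

import Mathlib

open MeasureTheory ProbabilityTheory

variable {Ω : Type*} [MeasurableSpace Ω]

/-- The event that the random variable `X` takes the value `x`. -/
def ev (X : Ω → ℝ) (x : ℝ) : Set Ω := {ω | X ω = x}

/-- The probability of an event, as a real number. -/
noncomputable def pr (P : Measure Ω) (s : Set Ω) : ℝ := (P s).toReal

/-- The conditional probability `P(s | t)`, as a real number. -/
noncomputable def cpr (P : Measure Ω) (s t : Set Ω) : ℝ := pr (P[|t]) s

/-- The covariance of two real-valued random variables. -/
noncomputable def rcov (P : Measure Ω) (X Y : Ω → ℝ) : ℝ :=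
  ∫ ω, (X ω - ∫ ω', X ω' ∂P) * (Y ω - ∫ ω', Y ω' ∂P) ∂P

/-- The conditional covariance of two real-valued random variables given an event. -/
noncomputable def covCond (P : Measure Ω) (X Y : Ω → ℝ) (t : Set Ω) : ℝ :=
  rcov (P[|t]) X Y

/-- The conditional variance of a real-valued random variable given an event. -/
noncomputable def varCond (P : Measure Ω) (X : Ω → ℝ) (t : Set Ω) : ℝ :=
  covCond P X X t

/-- A measurable `{0,1}`-valued random variable. -/
def IsBin (X : Ω → ℝ) : Prop := Measurable X ∧ ∀ ω, X ω = 0 ∨ X ω = 1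

lemma key_lin (p00 p01 p10 p11 : ℝ) (h0 : 0 ≤ p01) (h1 : p01 ≤ 1)
    (hkey : (p01 - p00) * (p01 - p11) < 0) :
    p11 * p00 < p10 * p01 ∨ (1 - p11) * (1 - p00) < (1 - p10) * (1 - p01) := by
  by_contra hc
  push_neg at hc
  obtain ⟨ha, hb⟩ := hc
  nlinarith [mul_nonneg h0 (sub_nonneg.2 hb), mul_nonneg (sub_nonneg.2 h1) (sub_nonneg.2 ha)]

set_option linter.unusedSectionVars false in
lemma ev_eq_preimage (X : Ω → ℝ) (x : ℝ) : ev X x = X ⁻¹' {x} := rfl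

lemma pr_nonneg (P : Measure Ω) (s : Set Ω) : 0 ≤ pr P s := ENNReal.toReal_nonneg

lemma pr_mono (P : Measure Ω) [IsFiniteMeasure P] {s t : Set Ω} (h : s ⊆ t) :
    pr P s ≤ pr P t :=
  ENNReal.toReal_mono (measure_ne_top P t) (measure_mono h)

lemma pr_split (P : Measure Ω) [IsFiniteMeasure P] (A s : Set Ω) (hs : MeasurableSet s) :
    pr P A = pr P (A ∩ s) + pr P (A ∩ sᶜ) := by
  unfold pr
  rw [← ENNReal.toReal_add (measure_ne_top P _) (measure_ne_top P _)]
  congr 1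
  rw [← Set.diff_eq]
  exact (measure_inter_add_diff A hs).symm

lemma cpr_eq (P : Measure Ω) [IsFiniteMeasure P] (s t : Set Ω) (ht : MeasurableSet t) :
    cpr P s t = pr P (t ∩ s) / pr P t := by
  unfold cpr pr
  rw [cond_apply ht]
  rcases eq_or_ne (P t) 0 with h | h
  · rw [h]
    simp [measure_inter_null_of_null_left _ h]
  · rw [ENNReal.toReal_mul, ENNReal.toReal_inv, inv_mul_eq_div]

lemma isBin_eq_indicator {X : Ω → ℝ} (hX : IsBin X) :
    X = (ev X 1).indicator (fun _ => (1:ℝ)) := by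
  funext ω
  rcases hX.2 ω with h | h
  · have : ω ∉ ev X 1 := by simp [ev, h]
    simp [Set.indicator_of_notMem this, h]
  · have : ω ∈ ev X 1 := h
    simp [Set.indicator_of_mem this, h]

lemma isBin_measurableSet {X : Ω → ℝ} (hX : IsBin X) (x : ℝ) : MeasurableSet (ev X x) :=
  hX.1 (measurableSet_singleton x)

lemma integral_isBin (μ : Measure Ω) {X : Ω → ℝ} (hX : IsBin X) :
    ∫ ω, X ω ∂μ = (μ (ev X 1)).toReal := by
  conv_lhs => rw [isBin_eq_indicator hX]
  rw [integral_indicator_const _ (isBin_measurableSet hX 1)]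
  simp
  rfl

lemma integrable_isBin (μ : Measure Ω) [IsFiniteMeasure μ] {X : Ω → ℝ} (hX : IsBin X) :
    Integrable X μ := by
  rw [isBin_eq_indicator hX]
  exact (integrable_const (1:ℝ)).indicator (isBin_measurableSet hX 1)

lemma mul_isBin_eq_indicator {X Y : Ω → ℝ} (hX : IsBin X) (hY : IsBin Y) :
    (fun ω => X ω * Y ω) = (ev X 1 ∩ ev Y 1).indicator (fun _ => (1:ℝ)) := by
  funext ω
  rcases hX.2 ω with h | h
  · have : ω ∉ ev X 1 ∩ ev Y 1 := fun hm => by simp [ev] at hm; rw [hm.1] at h; norm_num at h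
    simp [Set.indicator_of_notMem this, h]
  · rcases hY.2 ω with h' | h'
    · have : ω ∉ ev X 1 ∩ ev Y 1 := fun hm => by simp [ev] at hm; rw [hm.2] at h'; norm_num at h'
      simp [Set.indicator_of_notMem this, h']
    · have : ω ∈ ev X 1 ∩ ev Y 1 := ⟨h, h'⟩
      simp [Set.indicator_of_mem this, h, h']

lemma rcov_isBin (μ : Measure Ω) [IsProbabilityMeasure μ] {X Y : Ω → ℝ}
    (hX : IsBin X) (hY : IsBin Y) :
    rcov μ X Y = (μ (ev X 1 ∩ ev Y 1)).toReal
      - (μ (ev X 1)).toReal * (μ (ev Y 1)).toReal := by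
  have iX : Integrable X μ := integrable_isBin μ hX
  have iY : Integrable Y μ := integrable_isBin μ hY
  have iXY : Integrable (fun ω => X ω * Y ω) μ := by
    rw [mul_isBin_eq_indicator hX hY]
    exact (integrable_const (1:ℝ)).indicator ((isBin_measurableSet hX 1).inter (isBin_measurableSet hY 1))
  set a := ∫ ω, X ω ∂μ with ha
  set b := ∫ ω, Y ω ∂μ with hb
  have hXYint : ∫ ω, X ω * Y ω ∂μ = (μ (ev X 1 ∩ ev Y 1)).toReal := by
    rw [mul_isBin_eq_indicator hX hY,
      integral_indicator_const _ ((isBin_measurableSet hX 1).inter (isBin_measurableSet hY 1))]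
    simp
    rfl
  have expand : (fun ω => (X ω - a) * (Y ω - b))
      = fun ω => (X ω * Y ω - b * X ω) - (a * Y ω - a * b) := by
    funext ω; ring
  have : rcov μ X Y = ∫ ω, ((X ω * Y ω - b * X ω) - (a * Y ω - a * b)) ∂μ := by
    rw [rcov, ← ha, ← hb, expand]
  have e1 : ∫ ω, ((X ω * Y ω - b * X ω) - (a * Y ω - a * b)) ∂μ
      = (∫ ω, (X ω * Y ω - b * X ω) ∂μ) - ∫ ω, (a * Y ω - a * b) ∂μ :=
    integral_sub (iXY.sub (iX.const_mul b)) ((iY.const_mul a).sub (integrable_const (a*b)))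
  have e2 : ∫ ω, (X ω * Y ω - b * X ω) ∂μ
      = (∫ ω, X ω * Y ω ∂μ) - ∫ ω, b * X ω ∂μ := integral_sub iXY (iX.const_mul b)
  have e3 : ∫ ω, (a * Y ω - a * b) ∂μ
      = (∫ ω, a * Y ω ∂μ) - ∫ ω, (a*b) ∂μ := integral_sub (iY.const_mul a) (integrable_const (a*b))
  rw [this, e1, e2, e3, integral_const_mul, integral_const_mul, integral_const, hXYint]
  simp only [Measure.real, measure_univ, ENNReal.toReal_one, smul_eq_mul, one_mul]
  have eX : a = (μ (ev X 1)).toReal := by rw [ha]; exact integral_isBin μ hX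
  have eY : b = (μ (ev Y 1)).toReal := by rw [hb]; exact integral_isBin μ hY
  rw [eX, eY, integral_isBin μ hX, integral_isBin μ hY]
  ring

lemma covCond_isBin (P : Measure Ω) [IsProbabilityMeasure P] {X Y : Ω → ℝ}
    (hX : IsBin X) (hY : IsBin Y) (t : Set Ω) (ht : MeasurableSet t) (hne : P t ≠ 0) :
    covCond P X Y t = pr P (t ∩ (ev X 1 ∩ ev Y 1)) / pr P t
      - (pr P (t ∩ ev X 1) / pr P t) * (pr P (t ∩ ev Y 1) / pr P t) := by
  haveI := cond_isProbabilityMeasure (μ := P) (s := t) hne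
  have ec : ∀ s : Set Ω, ((P[|t]) s).toReal = pr P (t ∩ s) / pr P t :=
    fun s => cpr_eq P s t ht
  have e := rcov_isBin (P[|t]) hX hY
  rw [ec, ec, ec] at e
  exact e

set_option maxHeartbeats 8000000 in
/-- Corollary 1 on the sign of V-bias: (i) if the effects of `X` and `Y` on `C` are in the same
direction, V-bias is negative for at least one level of `C`; (ii) if they are in opposite
directions, V-bias is positive for at least one level of `C`. -/
theorem V_bias_sign_same_or_opposite_effects (P : Measure Ω) [IsProbabilityMeasure P]
    (X Y C : Ω → ℝ) (hX : IsBin X) (hY : IsBin Y) (hC : IsBin C)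
    (hindep : IndepFun X Y P)
    (hX1 : 0 < pr P (ev X 1)) (hX1' : pr P (ev X 1) < 1)
    (hY1 : 0 < pr P (ev Y 1)) (hY1' : pr P (ev Y 1) < 1) :
    (((cpr P (ev C 1) (ev X 1 ∩ ev Y 0) > cpr P (ev C 1) (ev X 0 ∩ ev Y 0) ∧
        cpr P (ev C 1) (ev X 1 ∩ ev Y 1) > cpr P (ev C 1) (ev X 0 ∩ ev Y 1) ∧
        cpr P (ev C 1) (ev X 0 ∩ ev Y 1) > cpr P (ev C 1) (ev X 0 ∩ ev Y 0) ∧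
        cpr P (ev C 1) (ev X 1 ∩ ev Y 1) > cpr P (ev C 1) (ev X 1 ∩ ev Y 0)) ∨
      (cpr P (ev C 1) (ev X 1 ∩ ev Y 0) < cpr P (ev C 1) (ev X 0 ∩ ev Y 0) ∧
        cpr P (ev C 1) (ev X 1 ∩ ev Y 1) < cpr P (ev C 1) (ev X 0 ∩ ev Y 1) ∧
        cpr P (ev C 1) (ev X 0 ∩ ev Y 1) < cpr P (ev C 1) (ev X 0 ∩ ev Y 0) ∧
        cpr P (ev C 1) (ev X 1 ∩ ev Y 1) < cpr P (ev C 1) (ev X 1 ∩ ev Y 0))) →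
      (0 < pr P (ev C 0) ∧ 0 < pr P (ev C 1) ∧
        ∃ c : ℝ, (c = 0 ∨ c = 1) ∧ covCond P X Y (ev C c) < 0)) ∧
    (((cpr P (ev C 1) (ev X 1 ∩ ev Y 0) > cpr P (ev C 1) (ev X 0 ∩ ev Y 0) ∧
        cpr P (ev C 1) (ev X 1 ∩ ev Y 1) > cpr P (ev C 1) (ev X 0 ∩ ev Y 1) ∧
        cpr P (ev C 1) (ev X 0 ∩ ev Y 1) < cpr P (ev C 1) (ev X 0 ∩ ev Y 0) ∧
        cpr P (ev C 1) (ev X 1 ∩ ev Y 1) < cpr P (ev C 1) (ev X 1 ∩ ev Y 0)) ∨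
      (cpr P (ev C 1) (ev X 1 ∩ ev Y 0) < cpr P (ev C 1) (ev X 0 ∩ ev Y 0) ∧
        cpr P (ev C 1) (ev X 1 ∩ ev Y 1) < cpr P (ev C 1) (ev X 0 ∩ ev Y 1) ∧
        cpr P (ev C 1) (ev X 0 ∩ ev Y 1) > cpr P (ev C 1) (ev X 0 ∩ ev Y 0) ∧
        cpr P (ev C 1) (ev X 1 ∩ ev Y 1) > cpr P (ev C 1) (ev X 1 ∩ ev Y 0))) →
      (0 < pr P (ev C 0) ∧ 0 < pr P (ev C 1) ∧
        ∃ c : ℝ, (c = 0 ∨ c = 1) ∧ covCond P X Y (ev C c) > 0)) := by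
  -- measurability
  have mX1 : MeasurableSet (ev X 1) := isBin_measurableSet hX 1
  have mY1 : MeasurableSet (ev Y 1) := isBin_measurableSet hY 1
  have mC1 : MeasurableSet (ev C 1) := isBin_measurableSet hC 1
  have mC0 : MeasurableSet (ev C 0) := isBin_measurableSet hC 0
  -- complements
  have hevX0 : ev X 0 = (ev X 1)ᶜ := by
    ext ω; simp only [ev, Set.mem_setOf_eq, Set.mem_compl_iff]
    rcases hX.2 ω with h | h <;> simp [h]
  have hevY0 : ev Y 0 = (ev Y 1)ᶜ := by
    ext ω; simp only [ev, Set.mem_setOf_eq, Set.mem_compl_iff]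
    rcases hY.2 ω with h | h <;> simp [h]
  have hevC0 : ev C 0 = (ev C 1)ᶜ := by
    ext ω; simp only [ev, Set.mem_setOf_eq, Set.mem_compl_iff]
    rcases hC.2 ω with h | h <;> simp [h]
  -- set algebra helpers
  have interE : ∀ t A B : Set Ω, (t ∩ A) ∩ B = (A ∩ B) ∩ t := by
    intro t A B; ext ω; simp only [Set.mem_inter_iff]; tauto
  -- marginals
  have haX0 : pr P (ev X 0) = 1 - pr P (ev X 1) := by
    have h := pr_split P Set.univ (ev X 1) mX1
    simp only [Set.univ_inter] at h
    rw [← hevX0] at h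
    have hu : pr P Set.univ = 1 := by simp [pr]
    rw [hu] at h; linarith
  have haY0 : pr P (ev Y 0) = 1 - pr P (ev Y 1) := by
    have h := pr_split P Set.univ (ev Y 1) mY1
    simp only [Set.univ_inter] at h
    rw [← hevY0] at h
    have hu : pr P Set.univ = 1 := by simp [pr]
    rw [hu] at h; linarith
  -- independence
  have hm : ∀ x y : ℝ, pr P (ev X x ∩ ev Y y) = pr P (ev X x) * pr P (ev Y y) := by
    intro x y
    unfold pr
    rw [ev_eq_preimage X x, ev_eq_preimage Y y,
      hindep.measure_inter_preimage_eq_mul {x} {y} (measurableSet_singleton x) (measurableSet_singleton y),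
      ENNReal.toReal_mul]
  have mXY : ∀ x y : ℝ, MeasurableSet (ev X x ∩ ev Y y) :=
    fun x y => (isBin_measurableSet hX x).inter (isBin_measurableSet hY y)
  -- joint cell facts
  have gen : ∀ x y : ℝ, 0 < pr P (ev X x) * pr P (ev Y y) →
      pr P ((ev X x ∩ ev Y y) ∩ ev C 1)
          = cpr P (ev C 1) (ev X x ∩ ev Y y) * (pr P (ev X x) * pr P (ev Y y)) ∧
      pr P ((ev X x ∩ ev Y y) ∩ ev C 0)
          = (1 - cpr P (ev C 1) (ev X x ∩ ev Y y)) * (pr P (ev X x) * pr P (ev Y y)) ∧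
      0 ≤ cpr P (ev C 1) (ev X x ∩ ev Y y) ∧ cpr P (ev C 1) (ev X x ∩ ev Y y) ≤ 1 := by
    intro x y hpos
    have hcpr := cpr_eq P (ev C 1) (ev X x ∩ ev Y y) (mXY x y)
    rw [hm x y] at hcpr
    have hmne : pr P (ev X x) * pr P (ev Y y) ≠ 0 := ne_of_gt hpos
    have h1 : pr P ((ev X x ∩ ev Y y) ∩ ev C 1)
        = cpr P (ev C 1) (ev X x ∩ ev Y y) * (pr P (ev X x) * pr P (ev Y y)) := by
      rw [hcpr, div_mul_cancel₀ _ hmne]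
    have hsplit := pr_split P (ev X x ∩ ev Y y) (ev C 1) mC1
    rw [← hevC0, hm x y] at hsplit
    have hle : pr P ((ev X x ∩ ev Y y) ∩ ev C 1) ≤ pr P (ev X x) * pr P (ev Y y) := by
      rw [← hm x y]; exact pr_mono P Set.inter_subset_left
    refine ⟨h1, by linarith, ?_, ?_⟩
    · rw [hcpr]; exact div_nonneg (pr_nonneg _ _) (le_of_lt hpos)
    · rw [hcpr, div_le_one hpos]; exact hle
  -- decomposition of any event over the four cells
  have prgen : ∀ t : Set Ω, pr P t
      = pr P ((ev X 1 ∩ ev Y 1) ∩ t) + pr P ((ev X 1 ∩ ev Y 0) ∩ t)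
        + pr P ((ev X 0 ∩ ev Y 1) ∩ t) + pr P ((ev X 0 ∩ ev Y 0) ∩ t) := by
    intro t
    have h1 := pr_split P t (ev X 1) mX1
    rw [← hevX0] at h1
    have h2 := pr_split P (t ∩ ev X 1) (ev Y 1) mY1
    have h3 := pr_split P (t ∩ ev X 0) (ev Y 1) mY1
    rw [← hevY0] at h2 h3
    have e1 : (t ∩ ev X 1) ∩ ev Y 1 = (ev X 1 ∩ ev Y 1) ∩ t := interE t _ _
    have e2 : (t ∩ ev X 1) ∩ ev Y 0 = (ev X 1 ∩ ev Y 0) ∩ t := interE t _ _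
    have e3 : (t ∩ ev X 0) ∩ ev Y 1 = (ev X 0 ∩ ev Y 1) ∩ t := interE t _ _
    have e4 : (t ∩ ev X 0) ∩ ev Y 0 = (ev X 0 ∩ ev Y 0) ∩ t := interE t _ _
    rw [e1, e2] at h2; rw [e3, e4] at h3
    linarith
  -- covariance identity
  have covgen : ∀ t : Set Ω, MeasurableSet t → 0 < pr P t →
      covCond P X Y t * (pr P t)^2
        = pr P ((ev X 1 ∩ ev Y 1) ∩ t) * pr P t
          - (pr P ((ev X 1 ∩ ev Y 1) ∩ t) + pr P ((ev X 1 ∩ ev Y 0) ∩ t))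
            * (pr P ((ev X 1 ∩ ev Y 1) ∩ t) + pr P ((ev X 0 ∩ ev Y 1) ∩ t)) := by
    intro t ht hpos
    have hne : P t ≠ 0 := by
      intro h; rw [pr, h] at hpos; simp at hpos
    have e := covCond_isBin P hX hY t ht hne
    have eXY : t ∩ (ev X 1 ∩ ev Y 1) = (ev X 1 ∩ ev Y 1) ∩ t := Set.inter_comm _ _
    have eX : pr P (t ∩ ev X 1)
        = pr P ((ev X 1 ∩ ev Y 1) ∩ t) + pr P ((ev X 1 ∩ ev Y 0) ∩ t) := by
      have h2 := pr_split P (t ∩ ev X 1) (ev Y 1) mY1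
      rw [← hevY0, interE t _ _, interE t _ _] at h2
      exact h2
    have eY : pr P (t ∩ ev Y 1)
        = pr P ((ev X 1 ∩ ev Y 1) ∩ t) + pr P ((ev X 0 ∩ ev Y 1) ∩ t) := by
      have h2 := pr_split P (t ∩ ev Y 1) (ev X 1) mX1
      rw [← hevX0] at h2
      have e1 : (t ∩ ev Y 1) ∩ ev X 1 = (ev X 1 ∩ ev Y 1) ∩ t := by
        ext ω; simp only [Set.mem_inter_iff]; tauto
      have e2 : (t ∩ ev Y 1) ∩ ev X 0 = (ev X 0 ∩ ev Y 1) ∩ t := by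
        ext ω; simp only [Set.mem_inter_iff]; tauto
      rw [e1, e2] at h2
      exact h2
    rw [eXY, eX, eY] at e
    rw [e]
    have hne' : pr P t ≠ 0 := ne_of_gt hpos
    field_simp
  -- abbreviate the conditional probabilities
  set p11 := cpr P (ev C 1) (ev X 1 ∩ ev Y 1) with hp11
  set p10 := cpr P (ev C 1) (ev X 1 ∩ ev Y 0) with hp10
  set p01 := cpr P (ev C 1) (ev X 0 ∩ ev Y 1) with hp01
  set p00 := cpr P (ev C 1) (ev X 0 ∩ ev Y 0) with hp00
  set a := pr P (ev X 1) with ha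
  set b := pr P (ev Y 1) with hb
  have ha0 : 0 < 1 - a := by linarith
  have hb0 : 0 < 1 - b := by linarith
  have g11 := gen 1 1 (mul_pos hX1 hY1)
  have g10 := gen 1 0 (by rw [haY0]; exact mul_pos hX1 hb0)
  have g01 := gen 0 1 (by rw [haX0]; exact mul_pos ha0 hY1)
  have g00 := gen 0 0 (by rw [haX0, haY0]; exact mul_pos ha0 hb0)
  rw [haY0] at g10 g00
  rw [haX0] at g01 g00
  obtain ⟨r11e, s11e, pb11l, pb11u⟩ := g11
  obtain ⟨r10e, s10e, pb10l, pb10u⟩ := g10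
  obtain ⟨r01e, s01e, pb01l, pb01u⟩ := g01
  obtain ⟨r00e, s00e, pb00l, pb00u⟩ := g00
  simp only [← hp11, ← hp10, ← hp01, ← hp00, ← ha, ← hb] at r11e s11e pb11l pb11u r10e s10e pb10l pb10u r01e s01e pb01l pb01u r00e s00e pb00l pb00u
  have RC1 : pr P (ev C 1)
      = p11 * (a * b) + p10 * (a * (1 - b)) + p01 * ((1 - a) * b) + p00 * ((1 - a) * (1 - b)) := by
    rw [prgen (ev C 1), r11e, r10e, r01e, r00e]
  have RC0 : pr P (ev C 0)
      = (1 - p11) * (a * b) + (1 - p10) * (a * (1 - b)) + (1 - p01) * ((1 - a) * b)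
        + (1 - p00) * ((1 - a) * (1 - b)) := by
    rw [prgen (ev C 0), s11e, s10e, s01e, s00e]
  set K := a * (1-a) * (b * (1-b)) with hKdef
  have hKpos : 0 < K := mul_pos (mul_pos hX1 ha0) (mul_pos hY1 hb0)
  clear_value p11 p10 p01 p00 a b K
  have covid : 0 < pr P (ev C 1) → 0 < pr P (ev C 0) →
      covCond P X Y (ev C 1) * (pr P (ev C 1))^2 = K * (p11 * p00 - p10 * p01)
      ∧ covCond P X Y (ev C 0) * (pr P (ev C 0))^2
        = K * ((1-p11) * (1-p00) - (1-p10) * (1-p01)) := by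
    intro hc1 hc0
    have e1 := covgen (ev C 1) mC1 hc1
    have e0 := covgen (ev C 0) mC0 hc0
    rw [r11e, r10e, r01e, RC1] at e1
    rw [s11e, s10e, s01e, RC0] at e0
    rw [RC1, RC0, hKdef]
    constructor
    · linear_combination e1
    · linear_combination e0
  clear gen covgen prgen hm interE mXY hevX0 hevY0 hevC0 haX0 haY0 mX1 mY1 mC1 mC0 hindep hX hY hC r11e s11e r10e s10e r01e s01e r00e s00e hp11 hp10 hp01 hp00 ha hb hKdef
  have part1 : (p01 - p00) * (p01 - p11) < 0 →
      0 < pr P (ev C 0) ∧ 0 < pr P (ev C 1) ∧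
        ∃ c : ℝ, (c = 0 ∨ c = 1) ∧ covCond P X Y (ev C c) < 0 := by
    intro hkey
    have h01pos : 0 < p01 := by
      by_contra hcon; push_neg at hcon
      nlinarith [mul_nonneg (by linarith : (0:ℝ) ≤ p00 - p01) (by linarith : (0:ℝ) ≤ p11 - p01)]
    have h01lt : p01 < 1 := by
      by_contra hcon; push_neg at hcon
      nlinarith [mul_nonneg (by linarith : (0:ℝ) ≤ p01 - p00) (by linarith : (0:ℝ) ≤ p01 - p11)]
    have hc1 : 0 < pr P (ev C 1) := by
      rw [RC1]
      nlinarith [mul_pos h01pos (mul_pos ha0 hY1),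
        mul_nonneg pb11l (mul_nonneg hX1.le hY1.le),
        mul_nonneg pb10l (mul_nonneg hX1.le hb0.le),
        mul_nonneg pb00l (mul_nonneg ha0.le hb0.le)]
    have hc0 : 0 < pr P (ev C 0) := by
      rw [RC0]
      nlinarith [mul_pos (by linarith : (0:ℝ) < 1 - p01) (mul_pos ha0 hY1),
        mul_nonneg (by linarith : (0:ℝ) ≤ 1 - p11) (mul_nonneg hX1.le hY1.le),
        mul_nonneg (by linarith : (0:ℝ) ≤ 1 - p10) (mul_nonneg hX1.le hb0.le),
        mul_nonneg (by linarith : (0:ℝ) ≤ 1 - p00) (mul_nonneg ha0.le hb0.le)]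
    obtain ⟨e1, e0⟩ := covid hc1 hc0
    refine ⟨hc0, hc1, ?_⟩
    rcases key_lin p00 p01 p10 p11 pb01l pb01u hkey with hlt | hlt
    · refine ⟨1, Or.inr rfl, ?_⟩
      have hneg : covCond P X Y (ev C 1) * (pr P (ev C 1))^2 < 0 := by
        rw [e1]; exact mul_neg_of_pos_of_neg hKpos (by linarith)
      nlinarith [pow_pos hc1 2]
    · refine ⟨0, Or.inl rfl, ?_⟩
      have hneg : covCond P X Y (ev C 0) * (pr P (ev C 0))^2 < 0 := by
        rw [e0]; exact mul_neg_of_pos_of_neg hKpos (by linarith)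
      nlinarith [pow_pos hc0 2]
  have part2 : (p00 - p01) * (p00 - p10) < 0 →
      0 < pr P (ev C 0) ∧ 0 < pr P (ev C 1) ∧
        ∃ c : ℝ, (c = 0 ∨ c = 1) ∧ covCond P X Y (ev C c) > 0 := by
    intro hkey
    have h00pos : 0 < p00 := by
      by_contra hcon; push_neg at hcon
      nlinarith [mul_nonneg (by linarith : (0:ℝ) ≤ p01 - p00) (by linarith : (0:ℝ) ≤ p10 - p00)]
    have h00lt : p00 < 1 := by
      by_contra hcon; push_neg at hcon
      nlinarith [mul_nonneg (by linarith : (0:ℝ) ≤ p00 - p01) (by linarith : (0:ℝ) ≤ p00 - p10)]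
    have hc1 : 0 < pr P (ev C 1) := by
      rw [RC1]
      nlinarith [mul_pos h00pos (mul_pos ha0 hb0),
        mul_nonneg pb11l (mul_nonneg hX1.le hY1.le),
        mul_nonneg pb10l (mul_nonneg hX1.le hb0.le),
        mul_nonneg pb01l (mul_nonneg ha0.le hY1.le)]
    have hc0 : 0 < pr P (ev C 0) := by
      rw [RC0]
      nlinarith [mul_pos (by linarith : (0:ℝ) < 1 - p00) (mul_pos ha0 hb0),
        mul_nonneg (by linarith : (0:ℝ) ≤ 1 - p11) (mul_nonneg hX1.le hY1.le),
        mul_nonneg (by linarith : (0:ℝ) ≤ 1 - p10) (mul_nonneg hX1.le hb0.le),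
        mul_nonneg (by linarith : (0:ℝ) ≤ 1 - p01) (mul_nonneg ha0.le hY1.le)]
    obtain ⟨e1, e0⟩ := covid hc1 hc0
    refine ⟨hc0, hc1, ?_⟩
    rcases key_lin p01 p00 p11 p10 pb00l pb00u hkey with hlt | hlt
    · refine ⟨1, Or.inr rfl, ?_⟩
      have hpos : 0 < covCond P X Y (ev C 1) * (pr P (ev C 1))^2 := by
        rw [e1]; exact mul_pos hKpos (by linarith)
      nlinarith [pow_pos hc1 2]
    · refine ⟨0, Or.inl rfl, ?_⟩
      have hpos : 0 < covCond P X Y (ev C 0) * (pr P (ev C 0))^2 := by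
        rw [e0]; exact mul_pos hKpos (by linarith)
      nlinarith [pow_pos hc0 2]
  refine ⟨?_, ?_⟩
  · rintro (⟨h1, h2, h3, h4⟩ | ⟨h1, h2, h3, h4⟩)
    · exact part1 (mul_neg_of_pos_of_neg (by linarith) (by linarith))
    · exact part1 (mul_neg_of_neg_of_pos (by linarith) (by linarith))
  · rintro (⟨h1, h2, h3, h4⟩ | ⟨h1, h2, h3, h4⟩)
    · exact part2 (mul_neg_of_pos_of_neg (by linarith) (by linarith))
    · exact part2 (mul_neg_of_neg_of_pos (by linarith) (by linarith))
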